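/- Let M be a matroid on ground set V, and let S and T be bases of M. For every partition S_1,...,S_k of S there exists a partition T_1,...,T_k of T such that (S \ S_i) ∪ T_i is a base of M for every i ∈ [k]. (Greene–Magnanti theorem.) -/

import Mathlib

open Set Function

namespace GM

variable {α : Type*} {M : Matroid α} {X Y I J : Set α} {e : α}

noncomputable def rk (M : Matroid α) (X : Set α) : ℕ := (M.exists_isBasis' X).choose.ncard

lemma rk_eq_ncard (hI : M.IsBasis' I X) : rk M X = I.ncard := by
  have h := (M.exists_isBasis' X).choose_spec
  rw [rk, Set.ncard_def, h.encard_eq_encard hI, ← Set.ncard_def]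

lemma indep_finite (hfin : M.E.Finite) (hI : M.Indep I) : I.Finite :=
  hfin.subset hI.subset_ground

lemma le_rk_of_indep (hfin : M.E.Finite) (hI : M.Indep I) (hIX : I ⊆ X) :
    I.ncard ≤ rk M X := by
  obtain ⟨J, hJ, hIJ⟩ := hI.subset_isBasis'_of_subset hIX
  rw [rk_eq_ncard hJ]
  exact Set.ncard_le_ncard hIJ (indep_finite hfin hJ.indep)

lemma rk_indep (hI : M.Indep I) : rk M I = I.ncard := rk_eq_ncard hI.isBasis_self.isBasis'

lemma rk_mono (hfin : M.E.Finite) (hXY : X ⊆ Y) : rk M X ≤ rk M Y := by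
  obtain ⟨I, hI⟩ := M.exists_isBasis' X
  rw [rk_eq_ncard hI]
  exact le_rk_of_indep hfin hI.indep (hI.subset.trans hXY)

lemma rk_le_ncard (hX : X.Finite) : rk M X ≤ X.ncard := by
  obtain ⟨I, hI⟩ := M.exists_isBasis' X
  rw [rk_eq_ncard hI]
  exact Set.ncard_le_ncard hI.subset hX

lemma indep_of_rk_eq_ncard (hfin : M.E.Finite) (hX : X ⊆ M.E) (h : rk M X = X.ncard) :
    M.Indep X := by
  obtain ⟨I, hI⟩ := M.exists_isBasis' X
  rw [rk_eq_ncard hI] at h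
  have : I = X := Set.eq_of_subset_of_ncard_le hI.subset (le_of_eq h.symm) (hfin.subset hX)
  exact this ▸ hI.indep

lemma rk_submod (hfin : M.E.Finite) (hX : X ⊆ M.E) (hY : Y ⊆ M.E) :
    rk M (X ∪ Y) + rk M (X ∩ Y) ≤ rk M X + rk M Y := by
  obtain ⟨I, hI⟩ := M.exists_isBasis' (X ∩ Y)
  obtain ⟨J, hJ, hIJ⟩ := hI.indep.subset_isBasis'_of_subset
    (hI.subset.trans (Set.inter_subset_left.trans subset_union_left))
  have hJfin : J.Finite := indep_finite hfin hJ.indep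
  have h1 : rk M (X ∪ Y) = J.ncard := rk_eq_ncard hJ
  have h2 : rk M (X ∩ Y) = I.ncard := rk_eq_ncard hI
  have hXle : (J ∩ X).ncard ≤ rk M X :=
    le_rk_of_indep hfin (hJ.indep.subset inter_subset_left) inter_subset_right
  have hYle : (J ∩ Y).ncard ≤ rk M Y :=
    le_rk_of_indep hfin (hJ.indep.subset inter_subset_left) inter_subset_right
  have hcup : (J ∩ X) ∪ (J ∩ Y) = J := by
    rw [← Set.inter_union_distrib_left]; exact Set.inter_eq_self_of_subset_left hJ.subset
  have hkey : (J ∩ X).ncard + (J ∩ Y).ncard ≥ J.ncard + I.ncard := by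
    have := Set.ncard_union_add_ncard_inter (J ∩ X) (J ∩ Y) (hJfin.subset inter_subset_left)
      (hJfin.subset inter_subset_left)
    rw [hcup] at this
    have hIsub : I ⊆ (J ∩ X) ∩ (J ∩ Y) := by
      refine subset_inter (subset_inter hIJ (hI.subset.trans inter_subset_left))
        (subset_inter hIJ (hI.subset.trans inter_subset_right))
    have := Set.ncard_le_ncard hIsub (hJfin.subset (inter_subset_left.trans inter_subset_left))
    omega
  omega

lemma rk_insert_le (hfin : M.E.Finite) (hX : X ⊆ M.E) (he : e ∈ M.E) :
    rk M (insert e X) ≤ rk M X + 1 := by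
  have h := rk_submod (X := X) (Y := {e}) hfin hX (by simpa)
  have h1 : rk M ({e} : Set α) ≤ 1 := by
    simpa using rk_le_ncard (M := M) (X := {e}) (Set.finite_singleton e)
  have h2 : rk M X ≤ rk M (X ∪ {e}) := rk_mono hfin subset_union_left
  have : insert e X = X ∪ {e} := by rw [Set.union_singleton]
  rw [this]
  omega

lemma rk_insert_eq_of_subset (hfin : M.E.Finite) (hY : Y ⊆ M.E) (he : e ∈ M.E)
    (hXY : X ⊆ Y) (h : rk M (insert e X) = rk M X) :
    rk M (insert e Y) = rk M Y := by
  refine le_antisymm ?_ (rk_mono hfin (subset_insert e Y))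
  have hsub := rk_submod (X := insert e X) (Y := Y) hfin
    (insert_subset he (hXY.trans hY)) hY
  have h1 : insert e X ∪ Y = insert e Y := by
    rw [Set.insert_union, Set.union_eq_self_of_subset_left hXY]
  have h2 : rk M X ≤ rk M (insert e X ∩ Y) :=
    rk_mono hfin (subset_inter (subset_insert e X) hXY)
  rw [h1] at hsub
  omega

lemma rk_eq_of_base_subset {B : Set α} (hfin : M.E.Finite) (hB : M.IsBase B)
    (hBX : B ⊆ X) (hX : X ⊆ M.E) : rk M X = B.ncard := by
  refine le_antisymm ?_ (le_rk_of_indep hfin hB.indep hBX)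
  have : rk M M.E = B.ncard := rk_eq_ncard hB.isBasis_ground.isBasis'
  exact this ▸ rk_mono hfin hX

lemma base_of_indep_ncard {B : Set α} (hfin : M.E.Finite) (hB : M.IsBase B)
    (hX : M.Indep X) (h : X.ncard = B.ncard) : M.IsBase X := by
  obtain ⟨B', hB', hXB'⟩ := hX.exists_isBase_superset
  have : X = B' := Set.eq_of_subset_of_ncard_le hXB'
    (by rw [hB'.ncard_eq_ncard_of_isBase hB, ← h]) (indep_finite hfin hB'.indep)
  exact this ▸ hB'

lemma ncard_biUnion {k : ℕ} (hfin : M.E.Finite) (f : Fin k → Set α)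
    (hsub : ∀ i, f i ⊆ M.E) (hdisj : Pairwise (Function.onFun Disjoint f)) :
    ∀ s : Finset (Fin k), (⋃ i ∈ s, f i).ncard = ∑ i ∈ s, (f i).ncard := by
  intro s
  induction s using Finset.induction_on with
  | empty => simp
  | @insert j s hj ih =>
    rw [Finset.set_biUnion_insert, Finset.sum_insert hj,
      Set.ncard_union_eq (Set.disjoint_iUnion₂_right.mpr fun i hi => hdisj (fun h : j = i => hj (by rw [h]; exact hi)))
        (hfin.subset (hsub j)) (hfin.subset (Set.iUnion₂_subset fun i _ => hsub i)), ih]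

theorem partition_aux (M : Matroid α) (hfin : M.E.Finite) (k : ℕ) :
    ∀ (n : ℕ) (F : Set α) (C : Fin k → Set α), F.ncard = n → F ⊆ M.E →
    (∀ i, M.Indep (C i)) → (∀ i, Disjoint F (C i)) →
    (∀ Z, Z ⊆ F → Z.ncard + ∑ i, (C i).ncard ≤ ∑ i, rk M (C i ∪ Z)) →
    ∃ U : Fin k → Set α, (∀ i, U i ⊆ F) ∧ Pairwise (Function.onFun Disjoint U) ∧
      (⋃ i, U i = F) ∧ ∀ i, M.Indep (C i ∪ U i) := by
  intro n
  induction n with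
  | zero =>
    intro F C hn hFE hCi _ _
    have hF : F = ∅ := (Set.ncard_eq_zero (hfin.subset hFE)).mp hn
    refine ⟨fun _ => ∅, by simp, ?_, by simp [hF], by simpa using hCi⟩
    intro a b _; simp [Function.onFun]
  | succ n IH =>
    intro F C hn hFE hCindep hCdisj hcond
    have hFfin : F.Finite := hfin.subset hFE
    obtain ⟨e, he⟩ : F.Nonempty := Set.nonempty_of_ncard_ne_zero (by omega)
    have heE : e ∈ M.E := hFE he
    have hF'E : F \ {e} ⊆ M.E := diff_subset.trans hFE
    have hF'card : (F \ {e}).ncard = n := by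
      have := Set.ncard_diff_singleton_add_one he hFfin; omega
    have hCE : ∀ i, C i ⊆ M.E := fun i => (hCindep i).subset_ground
    have hCfin : ∀ i, (C i).Finite := fun i => hfin.subset (hCE i)
    have heC : ∀ i, e ∉ C i := fun i => fun h => (hCdisj i).ne_of_mem he h rfl
    have hCZE : ∀ (i : Fin k) (Z : Set α), Z ⊆ F → C i ∪ Z ⊆ M.E :=
      fun i Z hZ => union_subset (hCE i) (hZ.trans hFE)
    have sum_split : ∀ (g : Fin k → ℕ) (i : Fin k),
        ∑ j, g j = g i + ∑ j ∈ Finset.univ.erase i, g j :=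
      fun g i => (Finset.add_sum_erase _ g (Finset.mem_univ i)).symm
    by_cases hgood : ∃ i, M.Indep (insert e (C i)) ∧
        ∀ Z, Z ⊆ F \ {e} →
          Z.ncard + (∑ j, (C j).ncard + 1) ≤
            rk M (insert e (C i ∪ Z)) + ∑ j ∈ Finset.univ.erase i, rk M (C j ∪ Z)
    · obtain ⟨i, hind, hcond'⟩ := hgood
      set C' : Fin k → Set α := Function.update C i (insert e (C i)) with hC'
      have hC'i : C' i = insert e (C i) := Function.update_self i _ C
      have hC'j : ∀ j, j ≠ i → C' j = C j := fun j hj => Function.update_of_ne hj _ C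
      have hsumC' : ∑ j, (C' j).ncard = ∑ j, (C j).ncard + 1 := by
        rw [sum_split (fun j => (C' j).ncard) i, sum_split (fun j => (C j).ncard) i, hC'i,
          Set.ncard_insert_of_notMem (heC i) (hCfin i)]
        have : ∑ j ∈ Finset.univ.erase i, (C' j).ncard
            = ∑ j ∈ Finset.univ.erase i, (C j).ncard :=
          Finset.sum_congr rfl fun j hj => by rw [hC'j j (Finset.mem_erase.mp hj).1]
        omega
      obtain ⟨U', hU'sub, hU'disj, hU'union, hU'indep⟩ := IH (F \ {e}) C' hF'card hF'E
        (fun j => by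
          rcases eq_or_ne j i with rfl | hj
          · rw [hC'i]; exact hind
          · rw [hC'j j hj]; exact hCindep j)
        (fun j => by
          rcases eq_or_ne j i with rfl | hj
          · rw [hC'i, Set.insert_eq, Set.disjoint_union_right]
            exact ⟨Set.disjoint_singleton_right.mpr (fun h => h.2 rfl),
              ((hCdisj j).mono_left diff_subset)⟩
          · rw [hC'j j hj]; exact (hCdisj j).mono_left diff_subset)
        (fun Z hZ => by
          have h := hcond' Z hZ
          rw [hsumC', sum_split (fun j => rk M (C' j ∪ Z)) i, hC'i, Set.insert_union]
          have : ∑ j ∈ Finset.univ.erase i, rk M (C' j ∪ Z)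
              = ∑ j ∈ Finset.univ.erase i, rk M (C j ∪ Z) :=
            Finset.sum_congr rfl fun j hj => by rw [hC'j j (Finset.mem_erase.mp hj).1]
          omega)
      refine ⟨Function.update U' i (insert e (U' i)), ?_, ?_, ?_, ?_⟩
      · intro j
        rcases eq_or_ne j i with rfl | hj
        · rw [Function.update_self]
          exact insert_subset he ((hU'sub j).trans diff_subset)
        · rw [Function.update_of_ne hj]
          exact (hU'sub j).trans diff_subset
      · intro a b hab
        have hdj := hU'disj hab
        have hea : ∀ j, e ∉ U' j := fun j h => ((hU'sub j) h).2 rfl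
        unfold Function.onFun
        rcases eq_or_ne a i with rfl | ha
        · rw [Function.update_self, Function.update_of_ne (Ne.symm hab),
            Set.insert_eq, Set.disjoint_union_left]
          exact ⟨Set.disjoint_singleton_left.mpr (hea b), hdj⟩
        · rcases eq_or_ne b i with rfl | hb
          · rw [Function.update_self, Function.update_of_ne ha,
              Set.insert_eq, Set.disjoint_union_right]
            exact ⟨Set.disjoint_singleton_right.mpr (hea a), hdj⟩
          · rw [Function.update_of_ne ha, Function.update_of_ne hb]; exact hdj
      · apply subset_antisymm
        · refine iUnion_subset fun j => ?_
          rcases eq_or_ne j i with rfl | hj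
          · rw [Function.update_self]
            exact insert_subset he ((hU'sub j).trans diff_subset)
          · rw [Function.update_of_ne hj]
            exact (hU'sub j).trans diff_subset
        · intro x hx
          rcases eq_or_ne x e with rfl | hxe
          · exact mem_iUnion.mpr ⟨i, by rw [Function.update_self]; exact mem_insert _ _⟩
          · have : x ∈ ⋃ j, U' j := hU'union.symm ▸ (Set.mem_diff_singleton.mpr ⟨hx, hxe⟩)
            obtain ⟨j, hj⟩ := mem_iUnion.mp this
            refine mem_iUnion.mpr ⟨j, ?_⟩
            rcases eq_or_ne j i with rfl | hji
            · rw [Function.update_self]; exact mem_insert_of_mem _ hj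
            · rw [Function.update_of_ne hji]; exact hj
      · intro j
        rcases eq_or_ne j i with rfl | hj
        · have := hU'indep j
          rw [hC'i, Set.insert_union] at this
          rw [Function.update_self, Set.union_insert]
          exact this
        · have := hU'indep j
          rw [hC'j j hj] at this
          rw [Function.update_of_ne hj]
          exact this
    · -- no good i : derive a contradiction
      exfalso
      push_neg at hgood
      have key : ∀ i : Fin k, ∃ Z, Z ⊆ F \ {e} ∧
          (∑ j, rk M (C j ∪ Z) = Z.ncard + ∑ j, (C j).ncard) ∧
          rk M (insert e (C i ∪ Z)) = rk M (C i ∪ Z) := by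
        intro i
        by_cases hind : M.Indep (insert e (C i))
        · obtain ⟨Z, hZsub, hZbad⟩ := hgood i hind
          refine ⟨Z, hZsub, ?_⟩
          have hZF : Z ⊆ F := hZsub.trans diff_subset
          have h1 := hcond Z hZF
          have h2 : rk M (C i ∪ Z) ≤ rk M (insert e (C i ∪ Z)) :=
            rk_mono hfin (subset_insert _ _)
          have h4 := sum_split (fun j => rk M (C j ∪ Z)) i
          omega
        · refine ⟨∅, empty_subset _, ?_, ?_⟩
          · simp only [Set.union_empty, Set.ncard_empty, zero_add]
            exact Finset.sum_congr rfl fun j _ => rk_indep (hCindep j)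
          · simp only [Set.union_empty]
            have h2 : rk M (C i) = (C i).ncard := rk_indep (hCindep i)
            have h3 : rk M (C i) ≤ rk M (insert e (C i)) := rk_mono hfin (subset_insert _ _)
            have h4 : rk M (insert e (C i)) ≤ rk M (C i) + 1 :=
              rk_insert_le hfin (hCE i) heE
            have h5 : rk M (insert e (C i)) ≠ (insert e (C i)).ncard := by
              intro h
              exact hind (indep_of_rk_eq_ncard hfin (insert_subset heE (hCE i)) h)
            rw [Set.ncard_insert_of_notMem (heC i) (hCfin i)] at h5
            omega
      choose Z hZsub hZtight hZins using key
      have tight_fold : ∀ s : Finset (Fin k), (⋃ j ∈ s, Z j) ⊆ F \ {e} ∧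
          ∑ j, rk M (C j ∪ ⋃ j' ∈ s, Z j') = (⋃ j' ∈ s, Z j').ncard + ∑ j, (C j).ncard := by
        intro s
        induction s using Finset.induction_on with
        | empty =>
          simp only [Finset.notMem_empty, Set.iUnion_of_empty, Set.iUnion_empty]
          refine ⟨empty_subset _, ?_⟩
          simp only [Set.union_empty, Set.ncard_empty, zero_add]
          exact Finset.sum_congr rfl fun j _ => rk_indep (hCindep j)
        | @insert a s ha ih =>
          obtain ⟨ihsub, ihtight⟩ := ih
          set A : Set α := ⋃ j' ∈ s, Z j' with hA
          have hBsub : Z a ⊆ F \ {e} := hZsub a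
          have hnew : (⋃ j' ∈ insert a s, Z j') = Z a ∪ A := by
            rw [Finset.set_biUnion_insert]
          rw [hnew]
          have hunionsub : Z a ∪ A ⊆ F \ {e} := union_subset hBsub ihsub
          refine ⟨hunionsub, ?_⟩
          -- submodular sum inequality
          have hsummod : ∑ j, rk M (C j ∪ (Z a ∪ A)) + ∑ j, rk M (C j ∪ (Z a ∩ A)) ≤
              ∑ j, rk M (C j ∪ Z a) + ∑ j, rk M (C j ∪ A) := by
            rw [← Finset.sum_add_distrib, ← Finset.sum_add_distrib]
            refine Finset.sum_le_sum fun j _ => ?_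
            have hsub := rk_submod (X := C j ∪ Z a) (Y := C j ∪ A) hfin
              (hCZE j (Z a) (hBsub.trans diff_subset))
              (hCZE j A (ihsub.trans diff_subset))
            have h1 : (C j ∪ Z a) ∪ (C j ∪ A) = C j ∪ (Z a ∪ A) := by
              rw [← Set.union_union_distrib_left]
            have h2 : rk M (C j ∪ (Z a ∩ A)) ≤ rk M ((C j ∪ Z a) ∩ (C j ∪ A)) :=
              rk_mono hfin (by rw [← Set.union_inter_distrib_left])
            rw [h1] at hsub
            omega
          have hcondU := hcond (Z a ∪ A) (hunionsub.trans diff_subset)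
          have hcondI := hcond (Z a ∩ A)
            ((inter_subset_left.trans hBsub).trans diff_subset)
          have hZafin : (Z a).Finite := hFfin.subset (hBsub.trans diff_subset)
          have hAfin : A.Finite := hFfin.subset (ihsub.trans diff_subset)
          have hcards := Set.ncard_union_add_ncard_inter (Z a) A hZafin hAfin
          have hta := hZtight a
          omega
      obtain ⟨hWsub, hWtight⟩ := tight_fold Finset.univ
      set W : Set α := ⋃ j' ∈ Finset.univ, Z j' with hW
      have hins : ∀ i, rk M (insert e (C i ∪ W)) = rk M (C i ∪ W) := by
        intro i
        refine rk_insert_eq_of_subset hfin (hCZE i W (hWsub.trans diff_subset)) heE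
          (union_subset_union_right _ ?_) (hZins i)
        exact Set.subset_biUnion_of_mem (Finset.mem_univ i)
      have hfinal := hcond (insert e W) (insert_subset he (hWsub.trans diff_subset))
      have hsum_eq : ∑ j, rk M (C j ∪ insert e W) = ∑ j, rk M (C j ∪ W) := by
        refine Finset.sum_congr rfl fun j _ => ?_
        rw [Set.union_insert]
        exact hins j
      have heW : e ∉ W := fun h => (hWsub h).2 rfl
      have hWfin : W.Finite := hFfin.subset (hWsub.trans diff_subset)
      rw [Set.ncard_insert_of_notMem heW hWfin, hsum_eq] at hfinal
      omega

end GM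

open GM Set

/-- Greene–Magnanti: for bases `S`, `T` of a matroid and any partition
`S_1, ..., S_k` of `S`, there exists a partition `T_1, ..., T_k` of `T` with
`(S \ S_i) ∪ T_i` a base for every `i`. -/
theorem greene_magnanti {α : Type*} (M : Matroid α) (hfin : M.E.Finite)
    (S T : Set α) (hS : M.IsBase S) (hT : M.IsBase T)
    (k : ℕ) (Spart : Fin k → Set α)
    (hSdisj : Pairwise (Function.onFun Disjoint Spart))
    (hSunion : ⋃ i, Spart i = S) :
    ∃ Tpart : Fin k → Set α,
      Pairwise (Function.onFun Disjoint Tpart) ∧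
      (⋃ i, Tpart i = T) ∧
      ∀ i, M.IsBase ((S \ Spart i) ∪ Tpart i) := by
  classical
  have hSE : S ⊆ M.E := hS.subset_ground
  have hTE : T ⊆ M.E := hT.subset_ground
  have hSfin : S.Finite := hfin.subset hSE
  have hTfin : T.Finite := hfin.subset hTE
  have hSp_sub : ∀ i, Spart i ⊆ S := fun i => hSunion ▸ Set.subset_iUnion Spart i
  set C : Fin k → Set α := fun i => (S \ Spart i) ∪ (Spart i ∩ T) with hC
  have hC_sub_S : ∀ i, C i ⊆ S := fun i =>
    union_subset diff_subset (inter_subset_left.trans (hSp_sub i))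
  have hC_indep : ∀ i, M.Indep (C i) := fun i => hS.indep.subset (hC_sub_S i)
  have hF_sub : T \ S ⊆ M.E := diff_subset.trans hTE
  have hF_disj : ∀ i, Disjoint (T \ S) (C i) :=
    fun i => (Set.disjoint_sdiff_left).mono_right (hC_sub_S i)
  have hrk_ground : ∀ X, S ⊆ X → X ⊆ M.E → rk M X = S.ncard :=
    fun X h1 h2 => rk_eq_of_base_subset hfin hS h1 h2
  have huniv : (⋃ i ∈ (Finset.univ : Finset (Fin k)), Spart i) = S := by
    simpa using hSunion
  -- cardinality bookkeeping
  have hsumSp : ∑ i, (Spart i).ncard = S.ncard := by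
    rw [← ncard_biUnion hfin Spart (fun i => (hSp_sub i).trans hSE) hSdisj Finset.univ, huniv]
  have hSpT_disj : Pairwise (Function.onFun Disjoint (fun i => Spart i ∩ T)) :=
    fun a b hab => (hSdisj hab).mono inter_subset_left inter_subset_left
  have hsumSpT : ∑ i, (Spart i ∩ T).ncard = (S ∩ T).ncard := by
    rw [← ncard_biUnion hfin (fun i => Spart i ∩ T)
      (fun i => inter_subset_left.trans ((hSp_sub i).trans hSE)) hSpT_disj Finset.univ]
    have hbU : (⋃ i ∈ (Finset.univ : Finset (Fin k)), (Spart i ∩ T)) = ⋃ i, (Spart i ∩ T) := by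
      simp
    rw [hbU, ← Set.iUnion_inter, hSunion]
  have hsumC : ∑ i, (C i).ncard + S.ncard = (∑ _i : Fin k, S.ncard) + (S ∩ T).ncard := by
    have h1 : ∀ i : Fin k, (C i).ncard = (S \ Spart i).ncard + (Spart i ∩ T).ncard := by
      intro i
      refine Set.ncard_union_eq ?_ (hSfin.subset diff_subset)
        (hSfin.subset (inter_subset_left.trans (hSp_sub i)))
      exact Set.disjoint_sdiff_left.mono_right inter_subset_left
    have h2 : ∀ i : Fin k, (S \ Spart i).ncard + (Spart i).ncard = S.ncard :=
      fun i => Set.ncard_diff_add_ncard_of_subset (hSp_sub i) hSfin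
    have e1 : ∑ i, (C i).ncard = ∑ i, ((S \ Spart i).ncard + (Spart i ∩ T).ncard) :=
      Finset.sum_congr rfl fun i _ => h1 i
    have e2 : ∑ i, ((S \ Spart i).ncard + (Spart i).ncard) = ∑ _i : Fin k, S.ncard :=
      Finset.sum_congr rfl fun i _ => h2 i
    rw [Finset.sum_add_distrib] at e1 e2
    omega
  -- the rank condition
  have hcond : ∀ Z, Z ⊆ T \ S →
      Z.ncard + ∑ i, (C i).ncard ≤ ∑ i, rk M (C i ∪ Z) := by
    intro Z hZ
    have hZT : Z ⊆ T := hZ.trans diff_subset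
    have hZE : Z ⊆ M.E := hZT.trans hTE
    have fold : ∀ s : Finset (Fin k),
        (∑ _i ∈ s, S.ncard) + rk M (((S \ ⋃ i ∈ s, Spart i) ∪ (S ∩ T)) ∪ Z) ≤
          (∑ i ∈ s, rk M (C i ∪ Z)) + S.ncard := by
      intro s
      induction s using Finset.induction_on with
      | empty =>
        have h1 : ((S \ ⋃ i ∈ (∅ : Finset (Fin k)), Spart i) ∪ (S ∩ T)) ∪ Z = S ∪ Z := by
          ext x; simp only [Finset.notMem_empty, Set.iUnion_of_empty, Set.iUnion_empty,
            Set.diff_empty, Set.mem_union, Set.mem_inter_iff]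
          tauto
        rw [h1, hrk_ground (S ∪ Z) subset_union_left (union_subset hSE hZE)]
        simp
      | @insert j s hj ih =>
        have hDsub : ∀ (u : Finset (Fin k)), (S \ ⋃ i ∈ u, Spart i) ∪ (S ∩ T) ⊆ S :=
          fun u => union_subset diff_subset inter_subset_left
        have hDZE : ∀ (u : Finset (Fin k)),
            ((S \ ⋃ i ∈ u, Spart i) ∪ (S ∩ T)) ∪ Z ⊆ M.E :=
          fun u => union_subset ((hDsub u).trans hSE) hZE
        have hsubmod := rk_submod (X := ((S \ ⋃ i ∈ s, Spart i) ∪ (S ∩ T)) ∪ Z)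
          (Y := C j ∪ Z) hfin (hDZE s) (union_subset ((hC_sub_S j).trans hSE) hZE)
        have hXuY : (((S \ ⋃ i ∈ s, Spart i) ∪ (S ∩ T)) ∪ Z) ∪ (C j ∪ Z) =
            (((S \ ⋃ i ∈ s, Spart i) ∪ (S ∩ T)) ∪ C j) ∪ Z := by
          ext x; simp only [Set.mem_union]; tauto
        have hSsub : S ⊆ (((S \ ⋃ i ∈ s, Spart i) ∪ (S ∩ T)) ∪ C j) ∪ Z := by
          intro x hx
          by_cases hxj : x ∈ Spart j
          · have hxnot : x ∉ ⋃ i ∈ s, Spart i := by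
              simp only [Set.mem_iUnion, not_exists]
              intro i hi hmem
              exact (hSdisj (fun h : i = j => hj (by rw [← h]; exact hi))).ne_of_mem
                hmem hxj rfl
            exact Or.inl (Or.inl (Or.inl ⟨hx, hxnot⟩))
          · exact Or.inl (Or.inr (Or.inl ⟨hx, hxj⟩))
        have hrkU : rk M ((((S \ ⋃ i ∈ s, Spart i) ∪ (S ∩ T)) ∪ C j) ∪ Z) = S.ncard :=
          hrk_ground _ hSsub (union_subset (union_subset ((hDsub s).trans hSE)
            ((hC_sub_S j).trans hSE)) hZE)
        have hmono : rk M (((S \ ⋃ i ∈ insert j s, Spart i) ∪ (S ∩ T)) ∪ Z) ≤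
            rk M ((((S \ ⋃ i ∈ s, Spart i) ∪ (S ∩ T)) ∪ Z) ∩ (C j ∪ Z)) := by
          refine rk_mono hfin ?_
          intro x hx
          rcases hx with hx | hxZ
          · rcases hx with hx | hx
            · have hx1 : x ∈ S := hx.1
              have hx2 : x ∉ ⋃ i ∈ insert j s, Spart i := hx.2
              have hxnj : x ∉ Spart j := by
                intro h
                apply hx2
                simp only [Set.mem_iUnion]
                exact ⟨j, Finset.mem_insert_self j s, h⟩
              have hxns : x ∉ ⋃ i ∈ s, Spart i := by
                intro h
                apply hx2
                simp only [Set.mem_iUnion] at h ⊢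
                obtain ⟨i, hi, hmem⟩ := h
                exact ⟨i, Finset.mem_insert_of_mem hi, hmem⟩
              exact ⟨Or.inl (Or.inl ⟨hx1, hxns⟩), Or.inl (Or.inl ⟨hx1, hxnj⟩)⟩
            · refine ⟨Or.inl (Or.inr hx), Or.inl ?_⟩
              by_cases hxj : x ∈ Spart j
              · exact Or.inr ⟨hxj, hx.2⟩
              · exact Or.inl ⟨hx.1, hxj⟩
          · exact ⟨Or.inr hxZ, Or.inr hxZ⟩
        rw [hXuY, hrkU] at hsubmod
        rw [Finset.sum_insert hj, Finset.sum_insert hj]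
        omega
    have hfold := fold Finset.univ
    have hDuniv : ((S \ ⋃ i ∈ (Finset.univ : Finset (Fin k)), Spart i) ∪ (S ∩ T)) ∪ Z
        = (S ∩ T) ∪ Z := by
      rw [huniv, Set.diff_self, Set.empty_union]
    have hrkD : rk M ((S ∩ T) ∪ Z) = (S ∩ T).ncard + Z.ncard := by
      have hindep : M.Indep ((S ∩ T) ∪ Z) :=
        hT.indep.subset (union_subset inter_subset_right hZT)
      rw [rk_indep hindep]
      refine Set.ncard_union_eq ?_ (hSfin.subset inter_subset_left) (hTfin.subset hZT)
      exact ((Set.disjoint_sdiff_left.mono_left hZ).symm).mono_left inter_subset_left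
    rw [hDuniv, hrkD] at hfold
    omega
  -- apply the partition theorem
  obtain ⟨U, hUsub, hUdisj, hUunion, hUindep⟩ := partition_aux M hfin k (T \ S).ncard
    (T \ S) C rfl hF_sub hC_indep hF_disj hcond
  -- final cardinality argument
  have hrkE : rk M M.E = S.ncard := hrk_ground M.E hSE subset_rfl
  have hCU_le : ∀ i, (C i ∪ U i).ncard ≤ S.ncard := by
    intro i
    have := le_rk_of_indep hfin (hUindep i) (hUindep i).subset_ground
    rwa [hrkE] at this
  have hCU_card : ∀ i : Fin k, (C i ∪ U i).ncard = (C i).ncard + (U i).ncard := by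
    intro i
    refine Set.ncard_union_eq ?_ (hSfin.subset (hC_sub_S i))
      (hTfin.subset ((hUsub i).trans diff_subset))
    exact (Set.disjoint_sdiff_left.mono_left (hUsub i)).symm.mono_left (hC_sub_S i)
  have hsumU : ∑ i, (U i).ncard = (T \ S).ncard := by
    rw [← ncard_biUnion hfin U (fun i => (hUsub i).trans hF_sub) hUdisj Finset.univ]
    congr 1
    simpa using hUunion
  have hTS : (T \ S).ncard + (S ∩ T).ncard = S.ncard := by
    have h1 : T \ (S ∩ T) = T \ S := by ext x; simp
    have h2 := Set.ncard_diff_add_ncard_of_subset (inter_subset_right : S ∩ T ⊆ T) hTfin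
    rw [h1] at h2
    rw [hT.ncard_eq_ncard_of_isBase hS] at h2
    exact h2
  have hsum_eq : ∑ i, (C i ∪ U i).ncard = ∑ _i : Fin k, S.ncard := by
    have e1 : ∑ i, (C i ∪ U i).ncard = ∑ i, ((C i).ncard + (U i).ncard) :=
      Finset.sum_congr rfl fun i _ => hCU_card i
    rw [Finset.sum_add_distrib] at e1
    omega
  have hall : ∀ i, (C i ∪ U i).ncard = S.ncard := by
    intro i
    by_contra hne
    have hlt : (C i ∪ U i).ncard < S.ncard := lt_of_le_of_ne (hCU_le i) hne
    have h0 := Finset.sum_lt_sum (s := Finset.univ)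
      (f := fun j => (C j ∪ U j).ncard) (g := fun _ => S.ncard)
      (fun j _ => hCU_le j) ⟨i, Finset.mem_univ i, hlt⟩
    have h2 : (∑ j, (C j ∪ U j).ncard) < ∑ _j : Fin k, S.ncard := h0
    omega
  have hbase : ∀ i, M.IsBase (C i ∪ U i) := by
    intro i
    refine base_of_indep_ncard hfin hS (hUindep i) ?_
    rw [hall i, hS.ncard_eq_ncard_of_isBase hS]
  -- assemble Tpart
  refine ⟨fun i => (Spart i ∩ T) ∪ U i, ?_, ?_, ?_⟩
  · intro a b hab
    have h1 : Disjoint (Spart a ∩ T) (Spart b ∩ T) := hSpT_disj hab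
    have h2 : Disjoint (Spart a ∩ T) (U b) :=
      ((Set.disjoint_sdiff_left.mono_left (hUsub b)).symm.mono_left
        (inter_subset_left.trans (hSp_sub a)))
    have h3 : Disjoint (U a) (Spart b ∩ T) :=
      (Set.disjoint_sdiff_left.mono_left (hUsub a)).mono_right
        (inter_subset_left.trans (hSp_sub b))
    have h4 : Disjoint (U a) (U b) := hUdisj hab
    simp only [Function.onFun, Set.disjoint_union_left, Set.disjoint_union_right]
    exact ⟨⟨h1, h3⟩, h2, h4⟩
  · rw [Set.iUnion_union_distrib, ← Set.iUnion_inter, hSunion, hUunion]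
    ext x; simp; tauto
  · intro i
    have : (S \ Spart i) ∪ ((Spart i ∩ T) ∪ U i) = C i ∪ U i := by
      rw [hC, ← Set.union_assoc]
    rw [this]
    exact hbase i
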